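/- (Rosenfeld–Hales inequality) For every pair of finite simple graphs G and H, α(G ⊠ H) ≤ α*(G) · α(H). -/

import Mathlib

open Finset

namespace SimpleGraph

variable {V W : Type*}

/-- The strong graph product. -/
def strongProd (G : SimpleGraph V) (H : SimpleGraph W) : SimpleGraph (V × W) where
  Adj x y := x ≠ y ∧ (x.1 = y.1 ∨ G.Adj x.1 y.1) ∧ (x.2 = y.2 ∨ H.Adj x.2 y.2)
  symm := by
    constructor
    rintro x y ⟨hne, h1, h2⟩
    exact ⟨hne.symm, h1.imp Eq.symm (fun h => G.adj_symm h), h2.imp Eq.symm (fun h => H.adj_symm h)⟩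
  loopless := by constructor; rintro x ⟨hne, -, -⟩; exact hne rfl

/-- The disjunctive graph product. -/
def disjProd (G : SimpleGraph V) (H : SimpleGraph W) : SimpleGraph (V × W) where
  Adj x y := G.Adj x.1 y.1 ∨ H.Adj x.2 y.2
  symm := ⟨fun _ _ h => h.imp (fun h => G.adj_symm h) (fun h => H.adj_symm h)⟩
  loopless := ⟨fun x h => h.elim (fun h => G.irrefl h) (fun h => H.irrefl h)⟩

/-- A finite set of vertices is independent if no two of its members are adjacent. -/
def IsIndep (G : SimpleGraph V) (s : Finset V) : Prop :=
  ∀ ⦃v⦄, v ∈ s → ∀ ⦃w⦄, w ∈ s → ¬ G.Adj v w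

/-- The independence number. -/
noncomputable def alpha (G : SimpleGraph V) [Fintype V] : ℕ :=
  sSup {n | ∃ s : Finset V, G.IsIndep s ∧ s.card = n}

/-- The fractional packing number. -/
noncomputable def alphaStar (G : SimpleGraph V) [Fintype V] : ℝ :=
  sSup {x | ∃ t : V → ℝ, (∀ v, 0 ≤ t v) ∧
    (∀ C : Finset V, G.IsClique (C : Set V) → ∑ v ∈ C, t v ≤ 1) ∧ x = ∑ v, t v}

/-- The Lovász number. -/
noncomputable def lovTheta (G : SimpleGraph V) [Fintype V] : ℝ :=
  sSup {x | ∃ B : Matrix V V ℝ, B.PosSemidef ∧ B.trace = 1 ∧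
    (∀ v w, G.Adj v w → B v w = 0) ∧ x = ∑ v, ∑ w, B v w}

/-- Schrijver's variant of the Lovász number. -/
noncomputable def thetaMinus (G : SimpleGraph V) [Fintype V] : ℝ :=
  sSup {x | ∃ B : Matrix V V ℝ, B.PosSemidef ∧ B.trace = 1 ∧ (∀ v w, 0 ≤ B v w) ∧
    (∀ v w, G.Adj v w → B v w = 0) ∧ x = ∑ v, ∑ w, B v w}

/-- Szegedy's variant of the Lovász number. -/
noncomputable def thetaPlus (G : SimpleGraph V) [Fintype V] : ℝ :=
  sSup {x | ∃ B : Matrix V V ℝ, B.PosSemidef ∧ B.trace = 1 ∧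
    (∀ v w, G.Adj v w → B v w ≤ 0) ∧ x = ∑ v, ∑ w, B v w}

/-- The clique covering number. -/
noncomputable def cliqueCoverNum (G : SimpleGraph V) [Fintype V] : ℕ :=
  sInf {n | ∃ C : Fin n → Finset V, (∀ i, G.IsClique (C i : Set V)) ∧ ∀ v, ∃ i, v ∈ C i}

/-- The blow-up of a graph along integer vertex weights. -/
def blup (G : SimpleGraph V) (p : V → ℕ) : SimpleGraph (Σ v, Fin (p v)) where
  Adj x y := G.Adj x.1 y.1
  symm := ⟨fun _ _ h => G.adj_symm h⟩
  loopless := ⟨fun x h => G.irrefl h⟩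

/-- The weighted independence number (integer weights). -/
noncomputable def alphaWNat (G : SimpleGraph V) [Fintype V] (p : V → ℕ) : ℕ :=
  sSup {n | ∃ s : Finset V, G.IsIndep s ∧ n = ∑ v ∈ s, p v}

/-- The weighted independence number (real weights). -/
noncomputable def alphaW (G : SimpleGraph V) [Fintype V] (p : V → ℝ) : ℝ :=
  sSup {x | ∃ s : Finset V, G.IsIndep s ∧ x = ∑ v ∈ s, p v}

end SimpleGraph

open SimpleGraph
open scoped RealInnerProductSpace

lemma alpha_bdd {V : Type*} [Fintype V] (G : SimpleGraph V) :
    BddAbove {n | ∃ s : Finset V, G.IsIndep s ∧ s.card = n} := by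
  refine ⟨Fintype.card V, ?_⟩
  rintro n ⟨t, -, rfl⟩
  exact t.card_le_univ

lemma indep_card_le_alpha {V : Type*} [Fintype V] {G : SimpleGraph V} {s : Finset V}
    (hs : G.IsIndep s) : s.card ≤ G.alpha := by
  rw [SimpleGraph.alpha]
  exact le_csSup (alpha_bdd G) ⟨s, hs, rfl⟩

lemma exists_indep_card_alpha {V : Type*} [Fintype V] (G : SimpleGraph V) :
    ∃ s : Finset V, G.IsIndep s ∧ s.card = G.alpha := by
  have : G.alpha ∈ {n | ∃ s : Finset V, G.IsIndep s ∧ s.card = n} := by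
    rw [SimpleGraph.alpha]
    exact Nat.sSup_mem ⟨0, ∅, fun v hv => absurd hv (Finset.notMem_empty v), rfl⟩
      (alpha_bdd G)
  exact this

theorem rosenfeld_hales {V W : Type*} [Fintype V] [Fintype W]
    (G : SimpleGraph V) (H : SimpleGraph W) :
    ((G.strongProd H).alpha : ℝ) ≤ G.alphaStar * (H.alpha : ℝ) := by
  classical
  obtain ⟨S, hS, hScard⟩ := exists_indep_card_alpha (G.strongProd H)
  set A : ℝ := (H.alpha : ℝ) with hA
  -- the alphaStar feasible set
  set P : Set ℝ := {x | ∃ t : V → ℝ, (∀ v, 0 ≤ t v) ∧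
    (∀ C : Finset V, G.IsClique (C : Set V) → ∑ v ∈ C, t v ≤ 1) ∧ x = ∑ v, t v} with hP
  have hbdd : BddAbove P := by
    refine ⟨Fintype.card V, ?_⟩
    rintro x ⟨t, ht0, htC, rfl⟩
    have h1 : ∀ v, t v ≤ 1 := by
      intro v
      have := htC {v} (by simp [SimpleGraph.isClique_singleton])
      simpa using this
    calc ∑ v, t v ≤ ∑ _v : V, (1 : ℝ) := Finset.sum_le_sum fun v _ => h1 v
      _ = Fintype.card V := by simp
  have halphaStar : G.alphaStar = sSup P := rfl
  by_cases hH : H.alpha = 0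
  · -- then S must be empty
    have hS0 : S = ∅ := by
      by_contra h
      obtain ⟨p, hp⟩ := Finset.nonempty_iff_ne_empty.2 h
      have : ({p.2} : Finset W).card ≤ H.alpha :=
        indep_card_le_alpha (fun a ha b hb hab => by
          simp only [Finset.mem_singleton] at ha hb
          subst ha; subst hb; exact H.irrefl hab)
      simp [hH] at this
    have h0 : (G.strongProd H).alpha = 0 := by rw [← hScard, hS0]; simp
    have hstar0 : 0 ≤ G.alphaStar := by
      rw [halphaStar]
      refine le_csSup hbdd ?_
      rw [hP]
      exact ⟨fun _ => 0, fun v => le_refl 0, fun C _ => by simp, by simp⟩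
    have hA0 : A = 0 := by rw [hA, hH]; simp
    rw [h0, hA0]
    simp
  · have hApos : (0 : ℝ) < A := by
      rw [hA]; exact_mod_cast Nat.pos_of_ne_zero hH
    -- define t
    set t : V → ℝ := fun v => ((S.filter (fun p => p.1 = v)).card : ℝ) / A with htdef
    have ht0 : ∀ v, 0 ≤ t v := fun v => by positivity
    have htC : ∀ C : Finset V, G.IsClique (C : Set V) → ∑ v ∈ C, t v ≤ 1 := by
      intro C hC
      set T := S.filter (fun p => p.1 ∈ C) with hT
      have hfiber : ∑ v ∈ C, (S.filter (fun p => p.1 = v)).card = T.card := by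
        rw [Finset.card_eq_sum_card_fiberwise (f := Prod.fst) (s := T) (t := C)
          (fun p hp => (Finset.mem_filter.1 hp).2)]
        refine Finset.sum_congr rfl fun v hv => ?_
        congr 1
        ext p
        simp only [hT, Finset.mem_filter]
        constructor
        · rintro ⟨h1, h2⟩; exact ⟨⟨h1, h2.symm ▸ hv⟩, h2⟩
        · rintro ⟨⟨h1, _⟩, h2⟩; exact ⟨h1, h2⟩
      have hinj : Set.InjOn Prod.snd (T : Set (V × W)) := by
        intro p hp q hq hpq
        simp only [hT, Finset.coe_filter, Set.mem_setOf_eq] at hp hq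
        by_contra hne
        have hne1 : p.1 ≠ q.1 := fun h => hne (Prod.ext h hpq)
        have hadj : G.Adj p.1 q.1 := hC hp.2 hq.2 hne1
        exact hS hp.1 hq.1 ⟨hne, Or.inr hadj, Or.inl hpq⟩
      have himg : H.IsIndep (T.image Prod.snd) := by
        intro w hw w' hw' hadj
        obtain ⟨p, hp, rfl⟩ := Finset.mem_image.1 hw
        obtain ⟨q, hq, rfl⟩ := Finset.mem_image.1 hw'
        simp only [hT, Finset.mem_filter] at hp hq
        have hpq : p ≠ q := fun h => H.irrefl (h ▸ hadj)
        have h1 : p.1 = q.1 ∨ G.Adj p.1 q.1 := by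
          by_cases h : p.1 = q.1
          · exact Or.inl h
          · exact Or.inr (hC hp.2 hq.2 h)
        exact hS hp.1 hq.1 ⟨hpq, h1, Or.inr hadj⟩
      have hcard : T.card ≤ H.alpha := by
        rw [← Finset.card_image_of_injOn hinj]
        exact indep_card_le_alpha himg
      have : ∑ v ∈ C, t v = (T.card : ℝ) / A := by
        simp only [htdef]
        rw [← Finset.sum_div]
        congr 1
        exact_mod_cast hfiber
      rw [this, div_le_one hApos, hA]
      exact_mod_cast hcard
    have hsum : ∑ v, t v = (S.card : ℝ) / A := by
      simp only [htdef]
      rw [← Finset.sum_div]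
      congr 1
      have := Finset.card_eq_sum_card_fiberwise (f := Prod.fst) (s := S)
        (t := (Finset.univ : Finset V)) (fun p _ => Finset.mem_univ _)
      exact_mod_cast this.symm
    have hle : (S.card : ℝ) / A ≤ G.alphaStar := by
      rw [← hsum, halphaStar]
      refine le_csSup hbdd ?_
      rw [hP]
      exact ⟨t, ht0, htC, rfl⟩
    rw [← hScard]
    calc (S.card : ℝ) = (S.card : ℝ) / A * A := by field_simp
      _ ≤ G.alphaStar * A := mul_le_mul_of_nonneg_right hle hApos.le
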